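/- Let N be an NFA over alphabet α with finite state type Q. Suppose (i) N has no empty states: for every q ∈ Q there is a word w with N.evalFrom {q} w ∩ N.accept nonempty; and (ii) the reverse NFA N^R is deterministic: N.accept is a singleton and for every state p and letter a there is exactly one state q with p ∈ N.step q a. Then the subset-construction DFA N^D is minimal on its reachable part: for any two reachable states S, T of N^D, if the right languages of S and T are equal then S = T. -/

import Mathlib

open Set

lemma evalFrom_biUnion' {α Q : Type*} (N : NFA α Q) (w : List α) (S : Set Q) :
    N.evalFrom S w = ⋃ p ∈ S, N.evalFrom {p} w := by
  induction w generalizing S with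
  | nil => simp
  | cons a w ih =>
      have h1 : ∀ T : Set Q, N.evalFrom T (a :: w) = N.evalFrom (N.stepSet T a) w := fun _ => rfl
      have hstep : ∀ s : Q, N.stepSet {s} a = N.step s a := by intro s; simp [NFA.stepSet]
      rw [h1, ih]
      ext q
      simp only [mem_iUnion, exists_prop]
      constructor
      · rintro ⟨p, hp, hq⟩
        rw [NFA.mem_stepSet] at hp
        obtain ⟨s, hs, hps⟩ := hp
        refine ⟨s, hs, ?_⟩
        rw [h1, hstep, ih]
        exact mem_iUnion₂.mpr ⟨p, hps, hq⟩
      · rintro ⟨s, hs, hq⟩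
        rw [h1, hstep, ih] at hq
        obtain ⟨p, hps, hq⟩ := mem_iUnion₂.mp hq
        exact ⟨p, NFA.mem_stepSet.mpr ⟨s, hs, hps⟩, hq⟩

lemma exists_unique_state {α Q : Type*} (N : NFA α Q)
    (haccept : ∃ q₀ : Q, N.accept = {q₀})
    (hdet : ∀ (p : Q) (a : α), ∃! q : Q, p ∈ N.step q a) (w : List α) :
    ∃! q : Q, (N.evalFrom {q} w ∩ N.accept).Nonempty := by
  induction w with
  | nil =>
      obtain ⟨q₀, hq₀⟩ := haccept
      refine ⟨q₀, ⟨q₀, by simp [hq₀]⟩, fun q hq => ?_⟩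
      obtain ⟨x, hx1, hx2⟩ := hq
      rw [hq₀] at hx2
      simp only [NFA.evalFrom_nil, mem_singleton_iff] at hx1 hx2
      rw [← hx1, hx2]
  | cons a w ih =>
      obtain ⟨q', hq', huq'⟩ := ih
      obtain ⟨q, hq, huq⟩ := hdet q' a
      have key : ∀ r : Q, (N.evalFrom {r} (a :: w) ∩ N.accept).Nonempty ↔ q' ∈ N.step r a := by
        intro r
        have h1 : N.evalFrom {r} (a :: w) = N.evalFrom (N.step r a) w := by
          show N.evalFrom (N.stepSet {r} a) w = _
          simp [NFA.stepSet]
        rw [h1, evalFrom_biUnion']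
        constructor
        · rintro ⟨x, hx1, hx2⟩
          simp only [mem_iUnion] at hx1
          obtain ⟨p, hp, hxp⟩ := hx1
          have : p = q' := huq' p ⟨x, hxp, hx2⟩
          rwa [← this]
        · intro h
          obtain ⟨x, hx1, hx2⟩ := hq'
          exact ⟨x, mem_iUnion.mpr ⟨q', mem_iUnion.mpr ⟨h, hx1⟩⟩, hx2⟩
      exact ⟨q, (key q).mpr hq, fun r hr => huq r ((key r).mp hr)⟩

/-- if an NFA `N` has no empty states and its reverse is
deterministic, then the subset-construction DFA `N.toDFA` is minimal on its
reachable part: reachable states with equal right languages are equal. -/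
theorem toDFA_minimal_of_reverse_deterministic {α Q : Type*} [Fintype Q] (N : NFA α Q)
    (hnoempty : ∀ q : Q, ∃ w : List α, (N.evalFrom {q} w ∩ N.accept).Nonempty)
    (haccept : ∃ q₀ : Q, N.accept = {q₀})
    (hdet : ∀ (p : Q) (a : α), ∃! q : Q, p ∈ N.step q a) :
    ∀ S T : Set Q, (∃ w : List α, S = N.toDFA.eval w) →
      (∃ w : List α, T = N.toDFA.eval w) →
      {w : List α | N.toDFA.evalFrom S w ∈ N.toDFA.accept} =
        {w : List α | N.toDFA.evalFrom T w ∈ N.toDFA.accept} →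
      S = T := by
  intro S T _ _ hlang
  have hR : ∀ (U : Set Q) (w : List α),
      N.toDFA.evalFrom U w ∈ N.toDFA.accept ↔ (N.evalFrom U w ∩ N.accept).Nonempty := by
    intro U w
    have : N.toDFA.evalFrom U w = N.evalFrom U w := rfl
    rw [this]
    constructor
    · rintro ⟨s, hs1, hs2⟩; exact ⟨s, hs1, hs2⟩
    · rintro ⟨s, hs1, hs2⟩; exact ⟨s, hs1, hs2⟩
  have hmem : ∀ (U : Set Q) (w : List α),
      (N.evalFrom U w ∩ N.accept).Nonempty ↔ ∃ q ∈ U, (N.evalFrom {q} w ∩ N.accept).Nonempty := by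
    intro U w
    rw [evalFrom_biUnion']
    constructor
    · rintro ⟨x, hx1, hx2⟩
      simp only [mem_iUnion] at hx1
      obtain ⟨q, hq, hxq⟩ := hx1
      exact ⟨q, hq, x, hxq, hx2⟩
    · rintro ⟨q, hq, x, hx1, hx2⟩
      exact ⟨x, mem_iUnion.mpr ⟨q, mem_iUnion.mpr ⟨hq, hx1⟩⟩, hx2⟩
  have main : ∀ S T : Set Q,
      {w : List α | N.toDFA.evalFrom S w ∈ N.toDFA.accept} =
        {w : List α | N.toDFA.evalFrom T w ∈ N.toDFA.accept} → S ⊆ T := by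
    intro S T h q hq
    obtain ⟨w, hw⟩ := hnoempty q
    have hwS : w ∈ {w : List α | N.toDFA.evalFrom S w ∈ N.toDFA.accept} := by
      rw [mem_setOf_eq, hR]
      exact (hmem S w).mpr ⟨q, hq, hw⟩
    rw [h, mem_setOf_eq, hR, hmem] at hwS
    obtain ⟨q', hq', hw'⟩ := hwS
    obtain ⟨r, -, hur⟩ := exists_unique_state N haccept hdet w
    have h1 : q = r := hur q hw
    have h2 : q' = r := hur q' hw'
    rwa [h1, ← h2]
  exact le_antisymm (main S T hlang) (main T S hlang.symm)
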